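/- (Necessity of the solvability condition.) Let A : ℝ → ℝ be continuous and bounded, and suppose ψ : ℝ → ℝ is a C² function such that ψ and ψ' are bounded on ℝ and −ψ''(ρ) − (1 − 3θ₀(ρ)²) ψ(ρ) = A(ρ) for all ρ ∈ ℝ. Then the integral ∫_ℝ A(ρ) θ₀'(ρ) dρ is absolutely convergent and equals 0. -/

import Mathlib

open MeasureTheory

/-- The standing wave profile `θ₀(ρ) = tanh(ρ/√2)`. -/
noncomputable def θ₀ (ρ : ℝ) : ℝ := Real.tanh (ρ / Real.sqrt 2)

open Filter Set

lemma my_hasDerivAt_tanh (x : ℝ) : HasDerivAt Real.tanh (1 - Real.tanh x ^ 2) x := by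
  have h := (Real.hasDerivAt_sinh x).div (Real.hasDerivAt_cosh x) (Real.cosh_pos x).ne'
  have hfun : (fun y => Real.sinh y / Real.cosh y) = Real.tanh := by
    funext y; rw [Real.tanh_eq_sinh_div_cosh]
  rw [show (Real.sinh / Real.cosh) = (fun y => Real.sinh y / Real.cosh y) from rfl, hfun] at h
  refine h.congr_deriv ?_
  have hc := (Real.cosh_pos x).ne'
  have hid := Real.cosh_sq_sub_sinh_sq x
  rw [Real.tanh_eq_sinh_div_cosh]
  field_simp

lemma my_tanh_eq (x : ℝ) :
    Real.tanh x = (1 - Real.exp (-(2*x))) / (1 + Real.exp (-(2*x))) := by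
  rw [Real.tanh_eq_sinh_div_cosh, Real.sinh_eq, Real.cosh_eq]
  have h1 : Real.exp (-(2*x)) = Real.exp (-x) * Real.exp (-x) := by
    rw [← Real.exp_add]; ring_nf
  have h2 : Real.exp (-x) = (Real.exp x)⁻¹ := Real.exp_neg x
  have h3 : (0:ℝ) < Real.exp x := Real.exp_pos x
  rw [h1, h2]
  field_simp

lemma my_tendsto_tanh_atTop : Tendsto Real.tanh atTop (nhds 1) := by
  have h2 : Tendsto (fun x : ℝ => 2 * x) atTop atTop :=
    tendsto_id.const_mul_atTop two_pos
  have h3 : Tendsto (fun x : ℝ => -(2 * x)) atTop atBot :=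
    tendsto_neg_atTop_atBot.comp h2
  have he : Tendsto (fun x : ℝ => Real.exp (-(2*x))) atTop (nhds 0) :=
    Real.tendsto_exp_atBot.comp h3
  have hnum : Tendsto (fun x : ℝ => 1 - Real.exp (-(2*x))) atTop (nhds 1) := by
    simpa using (tendsto_const_nhds (x := (1:ℝ))).sub he
  have hden : Tendsto (fun x : ℝ => 1 + Real.exp (-(2*x))) atTop (nhds 1) := by
    simpa using (tendsto_const_nhds (x := (1:ℝ))).add he
  have := hnum.div hden one_ne_zero
  simp only [div_one] at this
  exact this.congr (fun x => (my_tanh_eq x).symm)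

lemma my_tendsto_tanh_atBot : Tendsto Real.tanh atBot (nhds (-1)) := by
  have := (my_tendsto_tanh_atTop.comp tendsto_neg_atBot_atTop).neg
  simp only [Function.comp_def, Real.tanh_neg, neg_neg] at this
  exact this

lemma one_sub_tanh_sq (x : ℝ) : 1 - Real.tanh x ^ 2 = (Real.cosh x ^ 2)⁻¹ := by
  have hc := (Real.cosh_pos x).ne'
  rw [Real.tanh_eq_sinh_div_cosh]
  field_simp
  exact Real.cosh_sq_sub_sinh_sq x

lemma one_sub_tanh_sq_nonneg (x : ℝ) : 0 ≤ 1 - Real.tanh x ^ 2 := by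
  rw [one_sub_tanh_sq]; positivity

/-- First derivative of `θ₀`. -/
noncomputable def θ₁ (ρ : ℝ) : ℝ := (1 - θ₀ ρ ^ 2) / Real.sqrt 2

/-- Second derivative of `θ₀`. -/
noncomputable def θ₂ (ρ : ℝ) : ℝ := -(θ₀ ρ * (1 - θ₀ ρ ^ 2))

/-- Third derivative of `θ₀`. -/
noncomputable def θ₃ (ρ : ℝ) : ℝ := -((1 - 3 * θ₀ ρ ^ 2) * θ₁ ρ)

lemma sqrt2_pos : (0:ℝ) < Real.sqrt 2 := Real.sqrt_pos.mpr (by norm_num)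

lemma sqrt2_mul_self : Real.sqrt 2 * Real.sqrt 2 = 2 :=
  Real.mul_self_sqrt (by norm_num)

lemma hasDerivAt_θ₀ (ρ : ℝ) : HasDerivAt θ₀ (θ₁ ρ) ρ := by
  have hlin : HasDerivAt (fun ρ : ℝ => ρ / Real.sqrt 2) (1 / Real.sqrt 2) ρ :=
    (hasDerivAt_id ρ).div_const _
  have h := (my_hasDerivAt_tanh (ρ / Real.sqrt 2)).comp ρ hlin
  have hθ : (Real.tanh ∘ fun ρ : ℝ => ρ / Real.sqrt 2) = θ₀ := rfl
  rw [hθ] at h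
  refine h.congr_deriv ?_
  unfold θ₁ θ₀
  ring

lemma θ₁_nonneg (ρ : ℝ) : 0 ≤ θ₁ ρ :=
  div_nonneg (one_sub_tanh_sq_nonneg _) sqrt2_pos.le

lemma θ₁_even (ρ : ℝ) : θ₁ (-ρ) = θ₁ ρ := by
  unfold θ₁ θ₀
  rw [neg_div, Real.tanh_neg]
  ring

lemma hasDerivAt_θ₁ (ρ : ℝ) : HasDerivAt θ₁ (θ₂ ρ) ρ := by
  have h := (((hasDerivAt_θ₀ ρ).pow 2).const_sub 1).div_const (Real.sqrt 2)
  have hfun : (fun x => (1 - θ₀ x ^ 2) / Real.sqrt 2) = θ₁ := rfl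
  rw [show (fun x => (1 - (θ₀ ^ 2) x) / Real.sqrt 2) = θ₁ from rfl] at h
  refine h.congr_deriv ?_
  unfold θ₂ θ₁
  have h2 := sqrt2_mul_self
  have hne := sqrt2_pos.ne'
  field_simp
  have h3 : (2:ℕ) - 1 = 1 := rfl
  rw [h3, Real.sq_sqrt (by norm_num : (0:ℝ) ≤ 2)]
  push_cast
  ring

lemma hasDerivAt_θ₂ (ρ : ℝ) : HasDerivAt θ₂ (θ₃ ρ) ρ := by
  have h := (((hasDerivAt_θ₀ ρ).sub ((hasDerivAt_θ₀ ρ).pow 3))).neg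
  have hfun : (-(θ₀ - θ₀ ^ 3)) = θ₂ := by
    funext x; unfold θ₂; simp only [Pi.neg_apply, Pi.sub_apply, Pi.pow_apply]; ring
  rw [hfun] at h
  refine h.congr_deriv ?_
  unfold θ₃
  push_cast
  ring

lemma tendsto_θ₀_atTop : Tendsto θ₀ atTop (nhds 1) := by
  have hl : Tendsto (fun ρ : ℝ => ρ / Real.sqrt 2) atTop atTop :=
    tendsto_id.atTop_div_const sqrt2_pos
  exact my_tendsto_tanh_atTop.comp hl

lemma tendsto_θ₀_atBot : Tendsto θ₀ atBot (nhds (-1)) := by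
  have hl : Tendsto (fun ρ : ℝ => ρ / Real.sqrt 2) atBot atBot :=
    tendsto_id.atBot_div_const sqrt2_pos
  exact my_tendsto_tanh_atBot.comp hl

lemma tendsto_θ₁_atTop : Tendsto θ₁ atTop (nhds 0) := by
  have := ((tendsto_θ₀_atTop.pow 2).const_sub 1).div_const (Real.sqrt 2)
  norm_num at this
  exact this

lemma tendsto_θ₁_atBot : Tendsto θ₁ atBot (nhds 0) := by
  have := ((tendsto_θ₀_atBot.pow 2).const_sub 1).div_const (Real.sqrt 2)
  norm_num at this
  exact this

lemma tendsto_θ₂_atTop : Tendsto θ₂ atTop (nhds 0) := by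
  have := (tendsto_θ₀_atTop.mul ((tendsto_θ₀_atTop.pow 2).const_sub 1)).neg
  norm_num at this
  exact this

lemma tendsto_θ₂_atBot : Tendsto θ₂ atBot (nhds 0) := by
  have := (tendsto_θ₀_atBot.mul ((tendsto_θ₀_atBot.pow 2).const_sub 1)).neg
  norm_num at this
  exact this

lemma integrable_θ₁ : Integrable θ₁ := by
  have hIoi : IntegrableOn θ₁ (Ioi 0) :=
    integrableOn_Ioi_deriv_of_nonneg' (fun x _ => hasDerivAt_θ₀ x)
      (fun x _ => θ₁_nonneg x) tendsto_θ₀_atTop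
  rw [← integrableOn_univ, ← @Iio_union_Ici _ _ (0 : ℝ), integrableOn_union,
    integrableOn_Ici_iff_integrableOn_Ioi]
  refine ⟨?_, hIoi⟩
  rw [← (Measure.measurePreserving_neg (volume : Measure ℝ)).integrableOn_comp_preimage
      (Homeomorph.neg ℝ).measurableEmbedding]
  simp only [Function.comp_def, neg_preimage, neg_Iio, neg_zero]
  exact hIoi.congr_fun (fun x _ => (θ₁_even x).symm) measurableSet_Ioi

lemma continuous_θ₁ : Continuous θ₁ :=
  Differentiable.continuous (fun x => (hasDerivAt_θ₁ x).differentiableAt)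

/-- Necessity of the solvability condition: if a `C²` function `ψ`, bounded
together with its first derivative, solves `-ψ'' - (1 - 3θ₀²)ψ = A` with `A`
continuous and bounded, then `∫_ℝ A θ₀' = 0` (the integral being absolutely
convergent). -/
theorem solvability_condition_necessary (A ψ : ℝ → ℝ)
    (hA_cont : Continuous A) (hA_bdd : ∃ C : ℝ, ∀ ρ : ℝ, |A ρ| ≤ C)
    (hψ : ContDiff ℝ 2 ψ)
    (hψ_bdd : ∃ C : ℝ, ∀ ρ : ℝ, |ψ ρ| ≤ C)
    (hψ'_bdd : ∃ C : ℝ, ∀ ρ : ℝ, |deriv ψ ρ| ≤ C)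
    (heq : ∀ ρ : ℝ, -deriv (deriv ψ) ρ - (1 - 3 * θ₀ ρ ^ 2) * ψ ρ = A ρ) :
    Integrable (fun ρ : ℝ => A ρ * deriv θ₀ ρ) ∧
    (∫ ρ : ℝ, A ρ * deriv θ₀ ρ) = 0 := by
  obtain ⟨CA, hCA⟩ := hA_bdd
  obtain ⟨Cψ, hCψ⟩ := hψ_bdd
  obtain ⟨Cψ', hCψ'⟩ := hψ'_bdd
  have hψdiff : Differentiable ℝ ψ := hψ.differentiable (by norm_num)
  have hψ'1 : ContDiff ℝ 1 (deriv ψ) := by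
    have h2 : ContDiff ℝ (1 + 1) ψ := by exact_mod_cast hψ
    rw [contDiff_succ_iff_deriv] at h2
    exact h2.2.2
  have hψ'diff : Differentiable ℝ (deriv ψ) := hψ'1.differentiable one_ne_zero
  have hd1ψ : ∀ ρ, HasDerivAt ψ (deriv ψ ρ) ρ := fun ρ => (hψdiff ρ).hasDerivAt
  have hd2ψ : ∀ ρ, HasDerivAt (deriv ψ) (deriv (deriv ψ) ρ) ρ :=
    fun ρ => (hψ'diff ρ).hasDerivAt
  have hθ : deriv θ₀ = θ₁ := funext fun ρ => (hasDerivAt_θ₀ ρ).deriv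
  set C := max CA 0 with hC
  have hCnn : 0 ≤ C := le_max_right _ _
  have hint : Integrable (fun ρ : ℝ => A ρ * θ₁ ρ) := by
    refine Integrable.mono (integrable_θ₁.const_mul C)
      ((hA_cont.mul continuous_θ₁).aestronglyMeasurable) ?_
    filter_upwards with ρ
    simp only [Real.norm_eq_abs, abs_mul]
    have h1 : |A ρ| ≤ |C| := le_trans (le_trans (hCA ρ) (le_max_left _ _)) (le_abs_self C)
    exact mul_le_mul_of_nonneg_right h1 (abs_nonneg _)
  have hWd : ∀ ρ, HasDerivAt (fun x => deriv ψ x * θ₁ x - ψ x * θ₂ x)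
      (-(A ρ * θ₁ ρ)) ρ := by
    intro ρ
    have h := ((hd2ψ ρ).mul (hasDerivAt_θ₁ ρ)).sub ((hd1ψ ρ).mul (hasDerivAt_θ₂ ρ))
    refine h.congr_deriv ?_
    rw [← heq ρ]
    unfold θ₃ θ₂ θ₁
    ring
  have hbound : ∀ ρ : ℝ, ‖deriv ψ ρ * θ₁ ρ - ψ ρ * θ₂ ρ‖ ≤
      Cψ' * |θ₁ ρ| + Cψ * |θ₂ ρ| := by
    intro ρ
    calc ‖deriv ψ ρ * θ₁ ρ - ψ ρ * θ₂ ρ‖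
        ≤ |deriv ψ ρ * θ₁ ρ| + |ψ ρ * θ₂ ρ| := abs_sub _ _
      _ = |deriv ψ ρ| * |θ₁ ρ| + |ψ ρ| * |θ₂ ρ| := by rw [abs_mul, abs_mul]
      _ ≤ Cψ' * |θ₁ ρ| + Cψ * |θ₂ ρ| := by
          gcongr
          exacts [hCψ' ρ, hCψ ρ]
  have hWtop : Tendsto (fun x => deriv ψ x * θ₁ x - ψ x * θ₂ x) atTop (nhds 0) := by
    refine squeeze_zero_norm hbound ?_
    have := ((tendsto_θ₁_atTop.abs.const_mul Cψ').add (tendsto_θ₂_atTop.abs.const_mul Cψ))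
    simpa using this
  have hWbot : Tendsto (fun x => deriv ψ x * θ₁ x - ψ x * θ₂ x) atBot (nhds 0) := by
    refine squeeze_zero_norm hbound ?_
    have := ((tendsto_θ₁_atBot.abs.const_mul Cψ').add (tendsto_θ₂_atBot.abs.const_mul Cψ))
    simpa using this
  have key := integral_of_hasDerivAt_of_tendsto hWd hint.neg hWbot hWtop
  rw [integral_neg, sub_zero, neg_eq_zero] at key
  rw [hθ]
  exact ⟨hint, key⟩
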